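/- Let 0 ≤ p ≤ 1 and let n, M be integers with 1 ≤ n ≤ M. Under the product measure on {0,1}^M in which each of the M coordinates is an independent Bernoulli(p) random variable (value 1 with probability p), the probability that at least n coordinates equal 1 equals Σ_{t=n}^{M} C(t−1, n−1) · p^n · (1−p)^{t−n}. -/

import Mathlib

open MeasureTheory

lemma tail_eq_nb (p : ℝ) {n M : ℕ} (hn : 1 ≤ n) (hnM : n ≤ M) :
    ∑ k ∈ Finset.Icc n M, (M.choose k : ℝ) * p ^ k * (1 - p) ^ (M - k)
  = ∑ t ∈ Finset.Icc n M, ((t - 1).choose (n - 1) : ℝ) * p ^ n * (1 - p) ^ (t - n) := by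
  induction M, hnM using Nat.le_induction with
  | base => simp
  | succ M hM ih =>
    conv_rhs => rw [Finset.sum_Icc_succ_top (by omega : n ≤ M + 1)]
    have hshift : ∑ k ∈ Finset.Icc n (M + 1), (M.choose (k-1) : ℝ) * p ^ k * (1-p) ^ (M+1-k)
        = ∑ j ∈ Finset.Icc (n-1) M, (M.choose j : ℝ) * p ^ (j+1) * (1-p) ^ (M-j) := by
      refine Finset.sum_nbij' (fun k => k - 1) (fun j => j + 1) ?_ ?_ ?_ ?_ ?_ <;>
        intro a ha <;> simp only [Finset.mem_Icc] at * <;> try omega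
      have h1 : a - 1 + 1 = a := by omega
      have h2 : M + 1 - a = M - (a - 1) := by omega
      rw [h1, h2]
    have hins : Finset.Icc (n-1) M = insert (n-1) (Finset.Icc n M) := by
      ext x; simp [Finset.mem_Icc, Finset.mem_insert]; omega
    have hsplit : ∑ k ∈ Finset.Icc n (M + 1), ((M+1).choose k : ℝ) * p ^ k * (1-p) ^ (M+1-k)
        = ∑ k ∈ Finset.Icc n (M + 1), ((M.choose (k-1) : ℝ) * p ^ k * (1-p) ^ (M+1-k)
            + (M.choose k : ℝ) * p ^ k * (1-p) ^ (M+1-k)) := by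
      refine Finset.sum_congr rfl fun k hk => ?_
      simp only [Finset.mem_Icc] at hk
      have hk1 : k = (k - 1) + 1 := by omega
      have hc : (M+1).choose k = M.choose (k-1) + M.choose k := by
        conv_lhs => rw [hk1]
        rw [Nat.choose_succ_succ', ← hk1]
      rw [hc]
      push_cast
      ring
    rw [hsplit, Finset.sum_add_distrib, hshift, hins, Finset.sum_insert (by simp; omega)]
    have h3 : ∑ k ∈ Finset.Icc n (M + 1), (M.choose k : ℝ) * p ^ k * (1-p) ^ (M+1-k)
        = (1-p) * ∑ k ∈ Finset.Icc n M, (M.choose k : ℝ) * p ^ k * (1-p) ^ (M-k) := by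
      rw [Finset.sum_Icc_succ_top (by omega : n ≤ M + 1), Nat.choose_eq_zero_of_lt (by omega),
        Finset.mul_sum]
      simp only [Nat.cast_zero, zero_mul, add_zero]
      refine Finset.sum_congr rfl fun k hk => ?_
      simp only [Finset.mem_Icc] at hk
      have : M + 1 - k = (M - k) + 1 := by omega
      rw [this, pow_succ]; ring
    have h4 : ∑ j ∈ Finset.Icc n M, (M.choose j : ℝ) * p ^ (j+1) * (1-p) ^ (M-j)
        = p * ∑ k ∈ Finset.Icc n M, (M.choose k : ℝ) * p ^ k * (1-p) ^ (M-k) := by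
      rw [Finset.mul_sum]
      refine Finset.sum_congr rfl fun k hk => ?_
      rw [pow_succ]; ring
    rw [h3, h4, ih]
    have h5 : n - 1 + 1 = n := by omega
    have h6 : M - (n-1) = M + 1 - n := by omega
    have h7 : M + 1 - 1 = M := by omega
    rw [h5, h6, h7]
    ring

lemma count_bool_funs (M k : ℕ) :
    (Finset.univ.filter (fun ω : Fin M → Bool =>
      (Finset.univ.filter (fun i => ω i = true)).card = k)).card = M.choose k := by
  have : (Finset.univ.filter (fun ω : Fin M → Bool =>
      (Finset.univ.filter (fun i => ω i = true)).card = k)).card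
    = (Finset.powersetCard k (Finset.univ : Finset (Fin M))).card := by
    refine Finset.card_bij' (fun ω _ => Finset.univ.filter (fun i => ω i = true))
      (fun A _ => fun i => decide (i ∈ A)) ?_ ?_ ?_ ?_
    · intro ω hω
      simp only [Finset.mem_filter] at hω
      simp [Finset.mem_powersetCard, hω.2]
    · intro A hA
      simp only [Finset.mem_powersetCard] at hA
      simp [← hA.2]
    · intro ω hω
      funext i; simp
    · intro A hA
      ext i; simp
  rw [this, Finset.card_powersetCard, Finset.card_univ, Fintype.card_fin]

theorem bernoulli_at_least_n_successes
    (p : ℝ) (hp0 : 0 ≤ p) (hp1 : p ≤ 1)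
    (n M : ℕ) (hn : 1 ≤ n) (hnM : n ≤ M) :
    (Measure.pi (fun _ : Fin M =>
        (PMF.bernoulli (Real.toNNReal p) (Real.toNNReal_le_one.mpr hp1)).toMeasure))
      {ω : Fin M → Bool |
        n ≤ (Finset.univ.filter (fun i : Fin M => ω i = true)).card} =
      ENNReal.ofReal
        (∑ t ∈ Finset.Icc n M,
          ((t - 1).choose (n - 1) : ℝ) * p ^ n * (1 - p) ^ (t - n)) := by
  set c : (Fin M → Bool) → ℕ :=
    fun ω => (Finset.univ.filter (fun i : Fin M => ω i = true)).card with hc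
  set pe := ENNReal.ofReal p with hpe
  set F := Finset.univ.filter (fun ω : Fin M → Bool => n ≤ c ω) with hF
  -- Step 1: measure = sum over F of product of coordinate weights
  have step1 : (Measure.pi (fun _ : Fin M =>
        (PMF.bernoulli (Real.toNNReal p) (Real.toNNReal_le_one.mpr hp1)).toMeasure))
      {ω : Fin M → Bool | n ≤ c ω}
      = ∑ ω ∈ F, ∏ i : Fin M, (cond (ω i) pe (1 - pe)) := by
    have hset : {ω : Fin M → Bool | n ≤ c ω} = ⋃ ω ∈ F, {ω} := by
      ext ω; simp [hF]
    rw [hset, measure_biUnion_finset (by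
        intro a _ b _ hab
        simp [Set.disjoint_singleton, hab])
      (fun b _ => measurableSet_singleton b)]
    refine Finset.sum_congr rfl fun ω _ => ?_
    have h1 : ({ω} : Set (Fin M → Bool)) = Set.pi Set.univ (fun i => {ω i}) := by
      rw [Set.univ_pi_singleton]
    rw [h1, Measure.pi_pi]
    refine Finset.prod_congr rfl fun i _ => ?_
    rw [PMF.toMeasure_apply_singleton _ _ (measurableSet_singleton _)]
    rw [PMF.bernoulli_apply]
    cases ω i <;> simp [hpe, ENNReal.ofReal, ENNReal.coe_sub]
  -- Step 2: each product equals pe^(c ω) * (1-pe)^(M - c ω)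
  have step2 : ∀ ω : Fin M → Bool,
      ∏ i : Fin M, (cond (ω i) pe (1 - pe)) = pe ^ (c ω) * (1 - pe) ^ (M - c ω) := by
    intro ω
    rw [← Finset.prod_filter_mul_prod_filter_not Finset.univ (fun i => ω i = true)]
    have e1 : ∏ i ∈ Finset.univ.filter (fun i => ω i = true),
        (cond (ω i) pe (1 - pe)) = pe ^ (c ω) := by
      rw [Finset.prod_congr rfl (fun i hi => ?_), Finset.prod_const, hc]
      simp only [Finset.mem_filter] at hi
      rw [hi.2]; rfl
    have e2 : ∏ i ∈ Finset.univ.filter (fun i => ¬ ω i = true),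
        (cond (ω i) pe (1 - pe)) = (1 - pe) ^ (M - c ω) := by
      have hcard : (Finset.univ.filter (fun i => ¬ ω i = true)).card = M - c ω := by
        have h2 : c ω + (Finset.univ.filter (fun i => ¬ ω i = true)).card = M := by
          simpa using Finset.card_filter_add_card_filter_not
            (s := (Finset.univ : Finset (Fin M))) (p := fun i => ω i = true)
        omega
      rw [Finset.prod_congr rfl (fun i hi => ?_), Finset.prod_const, hcard]
      simp only [Finset.mem_filter, Bool.not_eq_true] at hi
      rw [hi.2]; rfl
    rw [e1, e2]
  rw [step1, Finset.sum_congr rfl (fun ω _ => step2 ω)]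
  -- Step 3: group by number of successes
  have hmaps : ∀ ω ∈ F, c ω ∈ Finset.Icc n M := by
    intro ω hω
    simp only [hF, Finset.mem_filter] at hω
    refine Finset.mem_Icc.mpr ⟨hω.2, ?_⟩
    calc c ω ≤ (Finset.univ : Finset (Fin M)).card := Finset.card_filter_le _ _
    _ = M := by rw [Finset.card_univ, Fintype.card_fin]
  rw [← Finset.sum_fiberwise_of_maps_to hmaps (fun ω => pe ^ (c ω) * (1 - pe) ^ (M - c ω))]
  have step3 : ∀ k ∈ Finset.Icc n M,
      ∑ ω ∈ F.filter (fun ω => c ω = k), pe ^ (c ω) * (1 - pe) ^ (M - c ω)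
      = (M.choose k : ENNReal) * (pe ^ k * (1 - pe) ^ (M - k)) := by
    intro k hk
    simp only [Finset.mem_Icc] at hk
    have hfib : F.filter (fun ω => c ω = k)
        = Finset.univ.filter (fun ω : Fin M → Bool => c ω = k) := by
      rw [hF, Finset.filter_filter]
      ext ω; simp only [Finset.mem_filter, Finset.mem_univ, true_and]
      constructor
      · exact fun h => h.2
      · intro h; exact ⟨by omega, h⟩
    rw [Finset.sum_congr hfib (fun ω hω => ?_), Finset.sum_const, count_bool_funs,
      nsmul_eq_mul]
    simp only [Finset.mem_filter] at hω
    rw [hω.2]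
  rw [Finset.sum_congr rfl step3]
  -- Step 4: convert to ofReal
  have hq : (1 : ENNReal) - pe = ENNReal.ofReal (1 - p) := by
    rw [ENNReal.ofReal_sub _ hp0, ENNReal.ofReal_one]
  have step4 : ∀ k ∈ Finset.Icc n M,
      (M.choose k : ENNReal) * (pe ^ k * (1 - pe) ^ (M - k))
      = ENNReal.ofReal ((M.choose k : ℝ) * p ^ k * (1 - p) ^ (M - k)) := by
    intro k _
    rw [hq, hpe, ← ENNReal.ofReal_pow hp0, ← ENNReal.ofReal_pow (by linarith),
      ← ENNReal.ofReal_natCast (M.choose k), ← ENNReal.ofReal_mul (pow_nonneg hp0 k),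
      ← ENNReal.ofReal_mul (Nat.cast_nonneg _), mul_assoc]
  rw [Finset.sum_congr rfl step4, ← ENNReal.ofReal_sum_of_nonneg (fun k _ =>
      mul_nonneg (mul_nonneg (Nat.cast_nonneg _) (pow_nonneg hp0 _))
        (pow_nonneg (by linarith) _)),
    tail_eq_nb p hn hnM]
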